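/- arXiv:2307.15048 — 2 statements merged into one kernel-verified Lean document; each statement's English description precedes it below -/
import Mathlib

section
/- The following holds for every sufficiently large Δ. Let G be a graph, let (L,M) be a correspondence assignment for G, let u be a vertex of G, and let S be a set of neighbors of u of size s = ⌈Δ^{7/12}⌉. Let φ₀ be a partial (L,M)-coloring of G − N[u]. If φ is a uniformly randomly chosen partial (L,M)-coloring of G, then the conditional probability, given that the restriction of φ to G − N[u] equals φ₀, of the event B_S (that S ∩ dom(φ) = ∅ and for every x ∈ S the event A_x is false, where A_x is the event that x ∉ dom(φ) and fewer than Δ^{7/12} colors are available at x) is less than 1/(8Δ³·binom(Δ,s)). -/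
open Filter MeasureTheory

namespace RandomCorr

/-- A correspondence assignment for a graph `G`: a list assignment `L` together with,
for each edge, a partial matching between the colors of its endpoints,
encoded as a symmetric relation `M` supported on edges of `G`. -/
structure CorrAssignment {V : Type} (G : SimpleGraph V) where
  L : V → Finset ℕ
  M : V → ℕ → V → ℕ → Prop
  symm : ∀ u i v j, M u i v j → M v j u i
  adj_of : ∀ u i v j, M u i v j → G.Adj u v
  mem_left : ∀ u i v j, M u i v j → i ∈ L u
  mem_right : ∀ u i v j, M u i v j → j ∈ L v
  matching : ∀ u i v j j', M u i v j → M u i v j' → j = j'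

variable {V : Type}

/-- An `(L,M)`-coloring. -/
def CorrAssignment.IsColoring {G : SimpleGraph V} (C : CorrAssignment G) (φ : V → ℕ) : Prop :=
  (∀ v, φ v ∈ C.L v) ∧ ∀ u v, ¬ C.M u (φ u) v (φ v)

/-- `(L,M)` is an `ℓ`-correspondence assignment. -/
def IsLAssignment {G : SimpleGraph V} (C : CorrAssignment G) (ℓ : ℕ) : Prop :=
  ∀ v, ℓ ≤ (C.L v).card

/-- The correspondence chromatic number of `G` is at most `ℓ`. -/
def corrChromAtMost (G : SimpleGraph V) (ℓ : ℕ) : Prop :=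
  ∀ C : CorrAssignment G, IsLAssignment C ℓ → ∃ φ, C.IsColoring φ

/-- Maximum degree of a finite graph. -/
noncomputable def maxDeg [Fintype V] (G : SimpleGraph V) : ℕ :=
  Finset.univ.sup fun v => (G.neighborSet v).ncard

/-- `binom(n, ≤ b) = ∑_{i=0}^{⌊b⌋} binom(n,i)`. -/
noncomputable def binomLe (n : ℕ) (b : ℝ) : ℕ :=
  ∑ i ∈ Finset.range (⌊b⌋₊ + 1), n.choose i

/-- The number of independent sets (including the empty set) of a subgraph `F`. -/
noncomputable def subIndepCount {W : Type} {H : SimpleGraph W} (F : H.Subgraph) : ℕ :=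
  {S : Set W | S ⊆ F.verts ∧ ∀ a ∈ S, ∀ b ∈ S, ¬ F.Adj a b}.ncard

/-- A neighborhood subgraph: a subgraph whose vertex set is contained in the
neighborhood of some vertex. -/
def IsNbrSubgraph {W : Type} {H : SimpleGraph W} (F : H.Subgraph) : Prop :=
  ∃ v, F.verts ⊆ H.neighborSet v

/-- `G` is `b`-IS-rich (with respect to maximum degree `Δ`): every `b`-large
neighborhood subgraph `F` satisfies `I(F) ≥ 2 · binom(|V(F)|, ≤ b)`. -/
def ISRich (G : SimpleGraph V) (b : ℝ) (Δ : ℕ) : Prop :=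
  ∀ F : G.Subgraph, IsNbrSubgraph F →
    (Δ : ℝ) ^ ((1 : ℝ)/3) < (binomLe F.verts.ncard b : ℝ) →
    2 * binomLe F.verts.ncard b ≤ subIndepCount F

/-- The cover graph of a correspondence assignment. -/
def coverGraph {G : SimpleGraph V} (C : CorrAssignment G) : SimpleGraph (V × ℕ) where
  Adj x y := C.M x.1 x.2 y.1 y.2
  symm := ⟨fun x y h => C.symm _ _ _ _ h⟩
  loopless := ⟨fun x h => (G.loopless.irrefl x.1) (C.adj_of _ _ _ _ h)⟩

/-- A correspondence assignment is `b`-IS-rich (with respect to `Δ`) if every `b`-large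
neighborhood subgraph of its cover graph has at least `2 · binom(|V(F)|, ≤ b)`
independent sets. -/
def CorrAssignment.ISRich {G : SimpleGraph V} (C : CorrAssignment G) (b : ℝ) (Δ : ℕ) : Prop :=
  ∀ F : (coverGraph C).Subgraph, IsNbrSubgraph F →
    (Δ : ℝ) ^ ((1 : ℝ)/3) < (binomLe F.verts.ncard b : ℝ) →
    2 * binomLe F.verts.ncard b ≤ subIndepCount F

/-- Bernoulli measure on `Bool` with success probability `p` (truncated to `[0,1]`). -/
noncomputable def bern (p : ℝ) : Measure Bool :=
  (PMF.bernoulli (min (Real.toNNReal p) 1) (min_le_right _ _)).toMeasure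

/-- The Erdős–Rényi measure: each potential edge appears independently with
probability `p`. -/
noncomputable def erdosRenyi (n : ℕ) (p : ℝ) : Measure (Sym2 (Fin n) → Bool) :=
  Measure.pi fun _ => bern p

/-- The graph determined by an edge-indicator function. -/
def graphOf {n : ℕ} (ω : Sym2 (Fin n) → Bool) : SimpleGraph (Fin n) where
  Adj u v := u ≠ v ∧ ω s(u, v) = true
  symm := by
    constructor
    intro u v h
    refine ⟨h.1.symm, ?_⟩
    rw [Sym2.eq_swap]
    exact h.2
  loopless := ⟨fun u h => h.1 rfl⟩

/-- `G` has a complete minor of order `k`. -/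
def HasCompleteMinor (G : SimpleGraph V) (k : ℕ) : Prop :=
  ∃ B : Fin k → Set V,
    (∀ i, (B i).Nonempty) ∧
    (∀ i, (G.induce (B i)).Connected) ∧
    (∀ i j, i ≠ j → Disjoint (B i) (B j)) ∧
    (∀ i j, i ≠ j → ∃ u ∈ B i, ∃ v ∈ B j, G.Adj u v)

/-- The Hadwiger number: the largest `k` such that `K_k` is a minor of `G`. -/
noncomputable def hadwigerNumber [Fintype V] (G : SimpleGraph V) : ℕ :=
  sSup {k | HasCompleteMinor G k}

/-- Independence number. -/
noncomputable def indepNum [Fintype V] (G : SimpleGraph V) : ℕ :=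
  sSup {k | ∃ S : Finset V, S.card = k ∧ ∀ a ∈ S, ∀ b ∈ S, ¬ G.Adj a b}

/-- A partial `(L,M)`-coloring. -/
def IsPartialColoring {G : SimpleGraph V} (C : CorrAssignment G) (φ : V → Option ℕ) : Prop :=
  (∀ v c, φ v = some c → c ∈ C.L v) ∧
  ∀ u v cu cv, φ u = some cu → φ v = some cv → ¬ C.M u cu v cv

/-- The number of colors available at `u` with respect to a partial coloring `φ`. -/
noncomputable def availCount {G : SimpleGraph V} (C : CorrAssignment G)
    (φ : V → Option ℕ) (u : V) : ℕ :=
  {c : ℕ | c ∈ C.L u ∧ ∀ v cv, φ v = some cv → ¬ C.M u c v cv}.ncard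

/-- The event `A_u`: `u` is uncolored and fewer than `Δ^{7/12}` colors are available
at `u`. -/
def EventA {G : SimpleGraph V} (C : CorrAssignment G) (Δ : ℕ) (u : V)
    (φ : V → Option ℕ) : Prop :=
  φ u = none ∧ (availCount C φ u : ℝ) < (Δ : ℝ) ^ ((7 : ℝ)/12)

/-- The number of independent sets of `F` of size at least `m`. -/
noncomputable def indepGeCount {W : Type} {H : SimpleGraph W} (F : H.Subgraph) (m : ℕ) : ℕ :=
  {S : Set W | S ⊆ F.verts ∧ (∀ a ∈ S, ∀ b ∈ S, ¬ F.Adj a b) ∧ m ≤ S.ncard}.ncard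

/-- The median size `ᾱ(F)` of an independent set: the largest `m` such that at least
half of the independent sets of `F` have size at least `m`. -/
noncomputable def medianIndep {W : Type} {H : SimpleGraph W} (F : H.Subgraph) : ℕ :=
  sSup {m : ℕ | subIndepCount F ≤ 2 * indepGeCount F m}

end RandomCorr


open RandomCorr

section Aux

variable {V : Type} [Fintype V] [DecidableEq V] {G : SimpleGraph V}

/-- The set of partial colorings is finite. -/
lemma partial_finite (C : CorrAssignment G) :
    {φ : V → Option ℕ | IsPartialColoring C φ}.Finite := by
  have h : {φ : V → Option ℕ | IsPartialColoring C φ} ⊆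
      Set.pi Set.univ (fun v => insert none (Option.some '' ((C.L v : Set ℕ)))) := by
    intro φ hφ
    rw [Set.mem_univ_pi]
    intro v
    cases hv : φ v with
    | none => exact Set.mem_insert _ _
    | some c => exact Set.mem_insert_of_mem _ ⟨c, hφ.1 v c hv, rfl⟩
  exact (Set.Finite.pi fun v => (((C.L v).finite_toSet.image _).insert _)).subset h

/-- Lower bound on the cardinality of a disjoint union. -/
lemma biUnion_card_ge {α β : Type*} [DecidableEq β] (m : ℕ) (s : Finset β) :
    ∀ f : β → Set α, (∀ b ∈ s, (f b).Finite) →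
      (∀ b ∈ s, ∀ b' ∈ s, b ≠ b' → Disjoint (f b) (f b')) →
      (∀ b ∈ s, m ≤ (f b).ncard) →
      s.card * m ≤ (⋃ b ∈ s, f b).ncard := by
  induction s using Finset.induction_on with
  | empty => simp
  | @insert b s hb ih =>
    intro f hfin hdisj hm
    rw [Finset.card_insert_of_notMem hb, add_mul, one_mul]
    have hU : (⋃ x ∈ insert b s, f x) = f b ∪ ⋃ x ∈ s, f x := by simp
    have hUfin : (⋃ x ∈ s, f x).Finite :=
      Set.Finite.biUnion s.finite_toSet (fun x hx => hfin x (Finset.mem_insert_of_mem hx))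
    have hd : Disjoint (f b) (⋃ x ∈ s, f x) := by
      rw [Set.disjoint_iUnion_right]
      intro x
      rw [Set.disjoint_iUnion_right]
      intro hx
      exact hdisj b (Finset.mem_insert_self _ _) x (Finset.mem_insert_of_mem hx)
        (by rintro rfl; exact hb hx)
    rw [hU, Set.ncard_union_eq hd (hfin b (Finset.mem_insert_self _ _)) hUfin]
    have h1 := ih f (fun x hx => hfin x (Finset.mem_insert_of_mem hx))
      (fun x hx y hy => hdisj x (Finset.mem_insert_of_mem hx) y (Finset.mem_insert_of_mem hy))
      (fun x hx => hm x (Finset.mem_insert_of_mem hx))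
    have h2 := hm b (Finset.mem_insert_self _ _)
    omega

/-- The greedy counting lemma: if all vertices of `T` are uncolored and each has at
least `|T|` available colors, then the number of extensions coloring all of `T`
is at least `|T|!`. -/
lemma greedy_count (C : CorrAssignment G) :
    ∀ (n : ℕ) (T : Finset V) (φ : V → Option ℕ), T.card = n →
      IsPartialColoring C φ → (∀ x ∈ T, φ x = none) →
      (∀ x ∈ T, T.card ≤ availCount C φ x) →
      Nat.factorial n ≤ {ψ : V → Option ℕ | IsPartialColoring C ψ ∧ (∀ v, v ∉ T → ψ v = φ v) ∧
        ∀ x ∈ T, ψ x ≠ none}.ncard := by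
  intro n
  induction n with
  | zero =>
    intro T φ hT hφ _ _
    rw [Finset.card_eq_zero] at hT
    subst hT
    have hmem : φ ∈ {ψ : V → Option ℕ | IsPartialColoring C ψ ∧
        (∀ v, v ∉ (∅ : Finset V) → ψ v = φ v) ∧ ∀ x ∈ (∅ : Finset V), ψ x ≠ none} :=
      ⟨hφ, fun v _ => rfl, by simp⟩
    have hfin := (partial_finite C).subset
      (fun ψ (hψ : ψ ∈ {ψ : V → Option ℕ | IsPartialColoring C ψ ∧
        (∀ v, v ∉ (∅ : Finset V) → ψ v = φ v) ∧ ∀ x ∈ (∅ : Finset V), ψ x ≠ none}) => hψ.1)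
    simpa [Nat.factorial, Nat.one_le_iff_ne_zero, Nat.pos_iff_ne_zero] using (Set.ncard_pos hfin).mpr ⟨φ, hmem⟩
  | succ n ih =>
    intro T φ hT hφ hnone havail
    obtain ⟨x, hx⟩ : T.Nonempty := Finset.card_pos.mp (by omega)
    set A : Set ℕ := {c : ℕ | c ∈ C.L x ∧ ∀ v cv, φ v = some cv → ¬ C.M x c v cv} with hA
    have hAfin : A.Finite := (C.L x).finite_toSet.subset (fun c hc => hc.1)
    have hAcard : n + 1 ≤ A.ncard := by
      have := havail x hx
      rwa [hT] at this
    -- for each available color c, the set of extensions of φ[x := c]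
    set f : ℕ → Set (V → Option ℕ) := fun c =>
      {ψ : V → Option ℕ | IsPartialColoring C ψ ∧
        (∀ v, v ∉ T.erase x → ψ v = Function.update φ x (some c) v) ∧
        ∀ y ∈ T.erase x, ψ y ≠ none} with hf
    have herase : (T.erase x).card = n := by
      rw [Finset.card_erase_of_mem hx, hT]
      omega
    -- key facts for c ∈ A
    have hcolc : ∀ c ∈ A, IsPartialColoring C (Function.update φ x (some c)) := by
      intro c hc
      constructor
      · intro v d hv
        by_cases hvx : v = x
        · subst hvx
          rw [Function.update_self] at hv
          rw [Option.some_inj] at hv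
          exact hv ▸ hc.1
        · rw [Function.update_of_ne hvx] at hv
          exact hφ.1 v d hv
      · intro a b ca cb ha hb hM
        by_cases hax : a = x <;> by_cases hbx : b = x
        · subst hax; subst hbx
          exact (G.loopless.irrefl _) (C.adj_of _ _ _ _ hM)
        · subst hax
          rw [Function.update_self, Option.some_inj] at ha
          rw [Function.update_of_ne hbx] at hb
          exact hc.2 b cb hb (ha ▸ hM)
        · subst hbx
          rw [Function.update_self, Option.some_inj] at hb
          rw [Function.update_of_ne hax] at ha
          exact hc.2 a ca ha (hb ▸ C.symm _ _ _ _ hM)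
        · rw [Function.update_of_ne hax] at ha
          rw [Function.update_of_ne hbx] at hb
          exact hφ.2 a b ca cb ha hb hM
    have hcount : ∀ c ∈ A, Nat.factorial n ≤ (f c).ncard := by
      intro c hc
      apply ih (T.erase x) (Function.update φ x (some c)) herase (hcolc c hc)
      · intro y hy
        rw [Function.update_of_ne (Finset.ne_of_mem_erase hy)]
        exact hnone y (Finset.mem_of_mem_erase hy)
      · -- availability decreases by at most one
        intro y hy
        rw [herase]
        set Ay : Set ℕ := {d : ℕ | d ∈ C.L y ∧ ∀ v cv, φ v = some cv → ¬ C.M y d v cv}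
        set Ayc : Set ℕ := {d : ℕ | d ∈ C.L y ∧
          ∀ v cv, Function.update φ x (some c) v = some cv → ¬ C.M y d v cv}
        set R : Set ℕ := {d : ℕ | C.M y d x c} with hR
        have hsub : Ay \ R ⊆ Ayc := by
          rintro d ⟨hd, hdR⟩
          refine ⟨hd.1, fun v cv hv hM => ?_⟩
          by_cases hvx : v = x
          · subst hvx
            rw [Function.update_self, Option.some_inj] at hv
            subst hv
            exact hdR hM
          · rw [Function.update_of_ne hvx] at hv
            exact hd.2 v cv hv hM
        have hRss : R.Subsingleton := by
          intro d hd d' hd'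
          exact C.matching x c y d d' (C.symm _ _ _ _ hd) (C.symm _ _ _ _ hd')
        have hRfin : R.Finite := hRss.finite
        have hRcard : R.ncard ≤ 1 := by
          rcases hRss.eq_empty_or_singleton with h | ⟨d, h⟩ <;> simp [h]
        have hAyfin : Ay.Finite := (C.L y).finite_toSet.subset (fun d hd => hd.1)
        have hAycfin : Ayc.Finite := (C.L y).finite_toSet.subset (fun d hd => hd.1)
        have h1 : Ay.ncard ≤ (Ay \ R).ncard + R.ncard :=
          Set.ncard_le_ncard_diff_add_ncard Ay R hRfin
        have h2 : (Ay \ R).ncard ≤ Ayc.ncard := Set.ncard_le_ncard hsub hAycfin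
        have h3 : n + 1 ≤ Ay.ncard := by
          have := havail y (Finset.mem_of_mem_erase hy)
          rwa [hT] at this
        have : n ≤ Ayc.ncard := by omega
        exact this
    -- the union of the f c over c ∈ A is contained in the target set
    have hAfinset := hAfin.toFinset
    have hA'card : n + 1 ≤ hAfin.toFinset.card := by
      rwa [Set.ncard_eq_toFinset_card _ hAfin] at hAcard
    have hffin : ∀ c ∈ hAfin.toFinset, (f c).Finite := by
      intro c _
      exact (partial_finite C).subset (fun ψ hψ => hψ.1)
    have hfdisj : ∀ c ∈ hAfin.toFinset, ∀ c' ∈ hAfin.toFinset, c ≠ c' →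
        Disjoint (f c) (f c') := by
      intro c _ c' _ hne
      rw [Set.disjoint_left]
      intro ψ hψ hψ'
      apply hne
      have h1 := hψ.2.1 x (Finset.notMem_erase x T)
      have h2 := hψ'.2.1 x (Finset.notMem_erase x T)
      rw [Function.update_self] at h1 h2
      rw [h1] at h2
      exact Option.some_inj.mp h2
    have hfm : ∀ c ∈ hAfin.toFinset, Nat.factorial n ≤ (f c).ncard := by
      intro c hc
      exact hcount c (hAfin.mem_toFinset.mp hc)
    have hunion := biUnion_card_ge (Nat.factorial n) hAfin.toFinset f hffin hfdisj hfm
    have hsubU : (⋃ c ∈ hAfin.toFinset, f c) ⊆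
        {ψ : V → Option ℕ | IsPartialColoring C ψ ∧ (∀ v, v ∉ T → ψ v = φ v) ∧
          ∀ y ∈ T, ψ y ≠ none} := by
      intro ψ hψ
      simp only [Set.mem_iUnion] at hψ
      obtain ⟨c, hc, hψ⟩ := hψ
      refine ⟨hψ.1, ?_, ?_⟩
      · intro v hv
        have hvx : v ≠ x := fun h => hv (h ▸ hx)
        have := hψ.2.1 v (fun h => hv (Finset.mem_of_mem_erase h))
        rwa [Function.update_of_ne hvx] at this
      · intro y hy
        by_cases hyx : y = x
        · subst hyx
          have := hψ.2.1 y (Finset.notMem_erase y T)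
          rw [Function.update_self] at this
          rw [this]
          simp
        · exact hψ.2.2 y (Finset.mem_erase.mpr ⟨hyx, hy⟩)
    have htargfin : {ψ : V → Option ℕ | IsPartialColoring C ψ ∧ (∀ v, v ∉ T → ψ v = φ v) ∧
        ∀ y ∈ T, ψ y ≠ none}.Finite := (partial_finite C).subset (fun ψ hψ => hψ.1)
    calc Nat.factorial (n + 1) = (n + 1) * Nat.factorial n := rfl
      _ ≤ hAfin.toFinset.card * Nat.factorial n := Nat.mul_le_mul_right _ hA'card
      _ ≤ (⋃ c ∈ hAfin.toFinset, f c).ncard := hunion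
      _ ≤ _ := Set.ncard_le_ncard hsubU htargfin

end Aux

/-- `n^n ≤ 3^n · n!`. -/
lemma pow_le_three_pow_mul_factorial : ∀ n : ℕ, (n : ℝ) ^ n ≤ 3 ^ n * Nat.factorial n
  | 0 => by norm_num
  | (n+1) => by
    rcases Nat.eq_zero_or_pos n with rfl | hn
    · norm_num [Nat.factorial]
    · have hnR : (0:ℝ) < n := by exact_mod_cast hn
      have ih := pow_le_three_pow_mul_factorial n
      have hexp : (1 + 1/(n:ℝ)) ^ n ≤ 3 := by
        have h1 : (1 + 1/(n:ℝ)) ^ n ≤ (Real.exp (1/(n:ℝ))) ^ n := by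
          apply pow_le_pow_left₀ (by positivity)
          have := Real.add_one_le_exp (1/(n:ℝ))
          linarith
        have h2 : (Real.exp (1/(n:ℝ))) ^ n = Real.exp 1 := by
          rw [← Real.exp_nat_mul]
          congr 1
          field_simp
        have h3 : Real.exp 1 < 2.7182818286 := Real.exp_one_lt_d9
        calc (1 + 1/(n:ℝ)) ^ n ≤ (Real.exp (1/(n:ℝ))) ^ n := h1
          _ = Real.exp 1 := h2
          _ ≤ 3 := by linarith
      have h1 : ((n:ℝ) + 1) ^ n ≤ 3 * (n:ℝ) ^ n := by
        have heq : (n:ℝ) + 1 = (1 + 1/(n:ℝ)) * n := by field_simp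
        calc ((n:ℝ) + 1) ^ n = (1 + 1/(n:ℝ)) ^ n * (n:ℝ) ^ n := by rw [heq, mul_pow]
          _ ≤ 3 * (n:ℝ) ^ n := by
              apply mul_le_mul_of_nonneg_right hexp (by positivity)
      calc ((n+1 : ℕ) : ℝ) ^ (n+1) = ((n:ℝ) + 1) * ((n:ℝ) + 1) ^ n := by push_cast; ring
        _ ≤ ((n:ℝ) + 1) * (3 * (n:ℝ) ^ n) := by
            apply mul_le_mul_of_nonneg_left h1 (by positivity)
        _ ≤ ((n:ℝ) + 1) * (3 * (3 ^ n * Nat.factorial n)) := by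
            apply mul_le_mul_of_nonneg_left _ (by positivity)
            apply mul_le_mul_of_nonneg_left ih (by norm_num)
        _ = 3 ^ (n+1) * (((n:ℝ) + 1) * Nat.factorial n) := by ring
        _ = 3 ^ (n+1) * Nat.factorial (n+1) := by rw [Nat.factorial_succ]; push_cast; ring

/-- The numerical inequality: for `Δ ≥ 9^12`, `8Δ³·C(Δ,s) < s!` where `s = ⌈Δ^{7/12}⌉`. -/
lemma numeric_ineq (Δ : ℕ) (hΔ : 9^12 ≤ Δ) :
    8 * Δ ^ 3 * Δ.choose ⌈(Δ : ℝ) ^ ((7 : ℝ)/12)⌉₊ < Nat.factorial ⌈(Δ : ℝ) ^ ((7 : ℝ)/12)⌉₊ := by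
  set s : ℕ := ⌈(Δ : ℝ) ^ ((7 : ℝ)/12)⌉₊ with hs
  set D : ℝ := (Δ : ℝ) with hD
  have hD9 : (9:ℝ)^(12:ℕ) ≤ D := by rw [hD]; exact_mod_cast hΔ
  have hDpos : (0:ℝ) < D := lt_of_lt_of_le (by norm_num) hD9
  have hs1 : D ^ ((7:ℝ)/12) ≤ (s : ℝ) := Nat.le_ceil _
  have hrpow_mono : ∀ z : ℝ, 0 ≤ z → ((9:ℝ)^(12:ℕ)) ^ z ≤ D ^ z := fun z hz =>
    Real.rpow_le_rpow (by positivity) hD9 hz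
  have h97 : ((9:ℝ)^(12:ℕ)) ^ ((7:ℝ)/12) = 9^(7:ℕ) := by
    rw [← Real.rpow_natCast (9:ℝ) 12, ← Real.rpow_mul (by norm_num), ← Real.rpow_natCast (9:ℝ) 7]
    norm_num
  have hs60 : 60 ≤ s := by
    have : (60:ℝ) ≤ (s:ℝ) := by
      have := hrpow_mono ((7:ℝ)/12) (by norm_num)
      rw [h97] at this
      have h9 : (60:ℝ) ≤ 9^(7:ℕ) := by norm_num
      linarith
    exact_mod_cast this
  set t : ℝ := D ^ ((1:ℝ)/12) with ht
  have ht9 : (9:ℝ) ≤ t := by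
    have := hrpow_mono ((1:ℝ)/12) (by norm_num)
    have h912 : ((9:ℝ)^(12:ℕ)) ^ ((1:ℝ)/12) = 9 := by
      rw [← Real.rpow_natCast (9:ℝ) 12, ← Real.rpow_mul (by norm_num)]
      norm_num
    rw [h912] at this
    exact this
  have htpos : (0:ℝ) < t := lt_of_lt_of_le (by norm_num) ht9
  -- main real inequality: 8 D^3 D^s 9^s < s^(2s)
  have hts : t ^ (60:ℕ) = D ^ (5:ℕ) := by
    rw [ht, ← Real.rpow_natCast (D ^ ((1:ℝ)/12)) 60, ← Real.rpow_mul hDpos.le,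
      ← Real.rpow_natCast D 5]
    norm_num
  have ht60 : D ^ (5:ℕ) ≤ t ^ s := by
    rw [← hts]
    exact pow_le_pow_right₀ (le_trans (by norm_num) ht9) hs60
  have hD53 : 8 * D^(3:ℕ) < D^(5:ℕ) := by
    have h2 : (8:ℝ) < D^(2:ℕ) := by nlinarith
    calc 8 * D^(3:ℕ) < D^(2:ℕ) * D^(3:ℕ) := by
          apply mul_lt_mul_of_pos_right h2 (by positivity)
      _ = D^(5:ℕ) := by ring
  have hsq : D * (t * t) ≤ (s:ℝ)^(2:ℕ) := by
    have h1 : D ^ ((7:ℝ)/12) * D ^ ((7:ℝ)/12) = D * (t * t) := by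
      rw [ht, ← Real.rpow_add hDpos, ← Real.rpow_add hDpos]
      nth_rewrite 2 [show D = D ^ (1:ℝ) from (Real.rpow_one D).symm]
      rw [← Real.rpow_add hDpos]
      norm_num
    have h2 : D ^ ((7:ℝ)/12) * D ^ ((7:ℝ)/12) ≤ (s:ℝ) * (s:ℝ) := by
      have h0 : (0:ℝ) ≤ D ^ ((7:ℝ)/12) := by positivity
      nlinarith
    rw [← h1]
    calc D ^ ((7:ℝ)/12) * D ^ ((7:ℝ)/12) ≤ (s:ℝ) * (s:ℝ) := h2
      _ = (s:ℝ)^(2:ℕ) := by ring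
  have hmainR : 8 * D^(3:ℕ) * D^s * 9^s < (s:ℝ)^(2*s) := by
    have hb1 : (0:ℝ) ≤ D * (t * t) := by positivity
    calc 8 * D^(3:ℕ) * D^s * 9^s < D^(5:ℕ) * D^s * 9^s := by
          apply mul_lt_mul_of_pos_right (mul_lt_mul_of_pos_right hD53 (by positivity))
            (by positivity)
      _ ≤ (t ^ s) * D^s * (t ^ s) := by
          apply mul_le_mul (mul_le_mul ht60 le_rfl (by positivity) (by positivity))
            (pow_le_pow_left₀ (by norm_num) ht9 s) (by positivity) (by positivity)
      _ = (D * (t * t)) ^ s := by rw [mul_pow, mul_pow]; ring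
      _ ≤ ((s:ℝ)^(2:ℕ)) ^ s := pow_le_pow_left₀ hb1 hsq s
      _ = (s:ℝ)^(2*s) := by rw [← pow_mul]
  -- use factorial lower bound
  have hfact : ((s:ℝ))^s ≤ 3^s * Nat.factorial s := pow_le_three_pow_mul_factorial s
  have hfact2 : (s:ℝ)^(2*s) ≤ 9^s * (Nat.factorial s : ℝ)^(2:ℕ) := by
    have h0 : (0:ℝ) ≤ (s:ℝ)^s := by positivity
    have := mul_le_mul hfact hfact h0 (by positivity)
    calc (s:ℝ)^(2*s) = (s:ℝ)^s * (s:ℝ)^s := by rw [two_mul, pow_add]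
      _ ≤ (3^s * Nat.factorial s) * (3^s * Nat.factorial s) := this
      _ = 9^s * (Nat.factorial s : ℝ)^(2:ℕ) := by
          rw [show ((9:ℝ))^s = 3^s * 3^s by rw [← mul_pow]; norm_num]
          ring
  have hR : 8 * D^(3:ℕ) * D^s < (Nat.factorial s : ℝ)^(2:ℕ) := by
    have h9pos : (0:ℝ) < 9^s := by positivity
    have := lt_of_lt_of_le hmainR hfact2
    calc 8 * D^(3:ℕ) * D^s = (8 * D^(3:ℕ) * D^s * 9^s) / 9^s := by field_simp
      _ < (9^s * (Nat.factorial s : ℝ)^(2:ℕ)) / 9^s := by apply div_lt_div_of_pos_right this h9pos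
      _ = (Nat.factorial s : ℝ)^(2:ℕ) := by field_simp
  -- back to ℕ
  have hN : 8 * Δ^3 * Δ^s < (Nat.factorial s)^2 := by
    have : ((8 * Δ^3 * Δ^s : ℕ) : ℝ) < (((Nat.factorial s)^2 : ℕ) : ℝ) := by push_cast; exact hR
    exact_mod_cast this
  -- conclude
  have hdf : Δ.choose s * Nat.factorial s ≤ Δ^s := by
    rw [mul_comm, ← Nat.descFactorial_eq_factorial_mul_choose]
    exact Nat.descFactorial_le_pow Δ s
  have hfpos : 0 < Nat.factorial s := Nat.factorial_pos s
  by_contra hcon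
  push_neg at hcon
  have : (Nat.factorial s)^2 * Nat.factorial s ≤ 8 * Δ^3 * Δ.choose s * (Nat.factorial s * Nat.factorial s) := by
    have := Nat.mul_le_mul hcon (le_refl ((Nat.factorial s)^2))
    calc (Nat.factorial s)^2 * Nat.factorial s = Nat.factorial s * (Nat.factorial s)^2 := by ring
      _ ≤ (8 * Δ^3 * Δ.choose s) * ((Nat.factorial s)^2) := this
      _ = 8 * Δ^3 * Δ.choose s * (Nat.factorial s * Nat.factorial s) := by ring

  have h2 : 8 * Δ^3 * Δ.choose s * (Nat.factorial s * Nat.factorial s) = (8 * Δ^3 * (Δ.choose s * Nat.factorial s)) * Nat.factorial s := by ring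
  have h3 : (8 * Δ^3 * (Δ.choose s * Nat.factorial s)) * Nat.factorial s ≤ (8 * Δ^3 * Δ^s) * Nat.factorial s := by
    apply Nat.mul_le_mul_right
    exact Nat.mul_le_mul_left _ hdf
  have h4 : (8 * Δ^3 * Δ^s) * Nat.factorial s < (Nat.factorial s)^2 * Nat.factorial s :=
    (Nat.mul_lt_mul_right hfpos).mpr hN
  exact lt_irrefl ((Nat.factorial s)^2 * Nat.factorial s)
    (lt_of_le_of_lt (this.trans (le_of_eq h2 |>.trans h3)) h4)

/-- (The conditional probability given that the restriction of `φ` to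
`G − N[u]` equals `φ₀` is expressed as a ratio of counts: `Pr[B_S | ·] < 1/(8Δ³·C(Δ,s))`
becomes `8Δ³·C(Δ,s)·|B_S ∩ B| < |B|`, where `B` is the conditioning event; `φ₀` is a
partial coloring of `G − N[u]`, encoded as a partial coloring of `G` undefined on `N[u]`.)
For all sufficiently large `Δ`: if `u ∈ V(G)`, `S` is a set of neighbors of `u` of size
`s = ⌈Δ^{7/12}⌉` and `φ₀` is a partial coloring of `G − N[u]`, then for a uniformly
random partial `(L,M)`-coloring `φ` of `G`, conditioned on its restriction to `G − N[u]`
being `φ₀`, the probability that `S ∩ dom(φ) = ∅` and `A_x` fails for all `x ∈ S` is less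
than `1/(8Δ³·C(Δ,s))`. -/
theorem eventBS_unlikely_conditional :
    ∃ Δ₀ : ℕ, ∀ Δ : ℕ, Δ₀ ≤ Δ →
      ∀ (V : Type) [Fintype V] (G : SimpleGraph V)
        (C : RandomCorr.CorrAssignment G) (u : V) (S : Finset V),
        (∀ x ∈ S, G.Adj u x) → S.card = ⌈(Δ : ℝ) ^ ((7 : ℝ)/12)⌉₊ →
        ∀ φ₀ : V → Option ℕ,
          RandomCorr.IsPartialColoring C φ₀ →
          (∀ v : V, v = u ∨ G.Adj u v → φ₀ v = none) →
          8 * Δ ^ 3 * Δ.choose ⌈(Δ : ℝ) ^ ((7 : ℝ)/12)⌉₊ *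
            Set.ncard {φ : V → Option ℕ | RandomCorr.IsPartialColoring C φ ∧
              (∀ v : V, ¬(v = u ∨ G.Adj u v) → φ v = φ₀ v) ∧
              (∀ x ∈ S, φ x = none) ∧
              (∀ x ∈ S, ¬ RandomCorr.EventA C Δ x φ)} <
          Set.ncard {φ : V → Option ℕ | RandomCorr.IsPartialColoring C φ ∧
            (∀ v : V, ¬(v = u ∨ G.Adj u v) → φ v = φ₀ v)} := by
  classical
  refine ⟨9^12, ?_⟩
  intro Δ hΔ V _ G C u S hS hScard φ₀ hφ₀ hφ₀none
  classical
  set s : ℕ := ⌈(Δ : ℝ) ^ ((7 : ℝ)/12)⌉₊ with hsdef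
  set B : Set (V → Option ℕ) := {φ : V → Option ℕ | RandomCorr.IsPartialColoring C φ ∧
      (∀ v : V, ¬(v = u ∨ G.Adj u v) → φ v = φ₀ v)} with hB
  set E : Set (V → Option ℕ) := {φ : V → Option ℕ | RandomCorr.IsPartialColoring C φ ∧
      (∀ v : V, ¬(v = u ∨ G.Adj u v) → φ v = φ₀ v) ∧
      (∀ x ∈ S, φ x = none) ∧ (∀ x ∈ S, ¬ RandomCorr.EventA C Δ x φ)} with hE
  have hBfin : B.Finite := (partial_finite C).subset (fun φ hφ => hφ.1)
  have hEfin : E.Finite := (partial_finite C).subset (fun φ hφ => hφ.1)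
  set f : (V → Option ℕ) → Set (V → Option ℕ) := fun φ =>
    {ψ : V → Option ℕ | RandomCorr.IsPartialColoring C ψ ∧ (∀ v, v ∉ S → ψ v = φ v) ∧
      ∀ x ∈ S, ψ x ≠ none} with hfdef
  have hkey : E.ncard * Nat.factorial s ≤ B.ncard := by
    have hffin : ∀ φ ∈ hEfin.toFinset, (f φ).Finite := fun φ _ =>
      (partial_finite C).subset (fun ψ hψ => hψ.1)
    have hdisj : ∀ φ₁ ∈ hEfin.toFinset, ∀ φ₂ ∈ hEfin.toFinset, φ₁ ≠ φ₂ →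
        Disjoint (f φ₁) (f φ₂) := by
      intro φ₁ h1 φ₂ h2 hne
      rw [Set.Finite.mem_toFinset] at h1 h2
      rw [Set.disjoint_left]
      intro ψ hψ1 hψ2
      apply hne
      funext v
      by_cases hv : v ∈ S
      · rw [h1.2.2.1 v hv, h2.2.2.1 v hv]
      · rw [← hψ1.2.1 v hv, ← hψ2.2.1 v hv]
    have hm : ∀ φ ∈ hEfin.toFinset, Nat.factorial s ≤ (f φ).ncard := by
      intro φ hφ
      rw [Set.Finite.mem_toFinset] at hφ
      have hcard : S.card = s := hScard
      apply greedy_count C s S φ hcard hφ.1 hφ.2.2.1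
      intro x hx
      have hA := hφ.2.2.2 x hx
      have hnone := hφ.2.2.1 x hx
      have hle : ¬ ((RandomCorr.availCount C φ x : ℝ) < (Δ : ℝ) ^ ((7 : ℝ)/12)) :=
        fun h => hA ⟨hnone, h⟩
      rw [hcard]
      exact Nat.ceil_le.mpr (not_lt.mp hle)
    have hsubU : (⋃ φ ∈ hEfin.toFinset, f φ) ⊆ B := by
      intro ψ hψ
      simp only [Set.mem_iUnion] at hψ
      obtain ⟨φ, hφmem, hψ⟩ := hψ
      rw [Set.Finite.mem_toFinset] at hφmem
      refine ⟨hψ.1, fun v hv => ?_⟩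
      have hvS : v ∉ S := fun h => hv (Or.inr (hS v h))
      rw [hψ.2.1 v hvS]
      exact hφmem.2.1 v hv
    have h1 := biUnion_card_ge (Nat.factorial s) hEfin.toFinset f hffin hdisj hm
    have h2 : (⋃ φ ∈ hEfin.toFinset, f φ).ncard ≤ B.ncard :=
      Set.ncard_le_ncard hsubU hBfin
    rw [← Set.ncard_eq_toFinset_card E hEfin] at h1
    exact le_trans h1 h2
  have hnum := numeric_ineq Δ hΔ
  rw [← hsdef] at hnum
  rcases Nat.eq_zero_or_pos E.ncard with h0 | hpos
  · rw [h0, Nat.mul_zero]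
    exact (Set.ncard_pos hBfin).mpr ⟨φ₀, hφ₀, fun v hv => rfl⟩
  · calc 8 * Δ ^ 3 * Δ.choose s * E.ncard
        < Nat.factorial s * E.ncard := (Nat.mul_lt_mul_right hpos).mpr hnum
      _ = E.ncard * Nat.factorial s := Nat.mul_comm _ _
      _ ≤ B.ncard := hkey
end

section
/- The following holds for every sufficiently large Δ. Let G be a graph of maximum degree Δ and let (L,M) be a correspondence assignment for G. Let u be a vertex of G and let φ₀ be a partial (L,M)-coloring of G − N[u]. If φ is a partial (L,M)-coloring of G chosen uniformly at random, then the conditional probability, given that the restriction of φ to G − N[u] equals φ₀, of the event B_u (that there are at least Δ^{7/12} neighbors x of u such that x ∉ dom(φ) and the event A_x is false, where A_x is the event that x ∉ dom(φ) and fewer than Δ^{7/12} colors are available at x) is less than 1/(8Δ³). -/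
open Filter MeasureTheory

namespace RandomCorr

section AuxLemmas

variable {V : Type} {G : SimpleGraph V}

/-- The set of colors available at `x`. -/
def availSet (C : CorrAssignment G) (φ : V → Option ℕ) (x : V) : Set ℕ :=
  {c : ℕ | c ∈ C.L x ∧ ∀ v cv, φ v = some cv → ¬ C.M x c v cv}

lemma availCount_eq (C : CorrAssignment G) (φ : V → Option ℕ) (x : V) :
    availCount C φ x = (availSet C φ x).ncard := rfl

lemma availSet_finite (C : CorrAssignment G) (φ : V → Option ℕ) (x : V) :
    (availSet C φ x).Finite :=
  (C.L x).finite_toSet.subset fun _ hc => hc.1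

lemma matching_left (C : CorrAssignment G) {x y : V} {c c' d : ℕ}
    (h : C.M x c y d) (h' : C.M x c' y d) : c = c' :=
  C.matching y d x c c' (C.symm _ _ _ _ h) (C.symm _ _ _ _ h')

lemma isPartial_update [DecidableEq V] {C : CorrAssignment G} {ψ : V → Option ℕ} {x : V} {c : ℕ}
    (hψ : IsPartialColoring C ψ) (hc : c ∈ availSet C ψ x) :
    IsPartialColoring C (Function.update ψ x (some c)) := by
  have hval : ∀ (b : V) (cb : ℕ), Function.update ψ x (some c) b = some cb →
      (b = x ∧ cb = c) ∨ (b ≠ x ∧ ψ b = some cb) := by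
    intro b cb hb
    by_cases hbx : b = x
    · rw [hbx, Function.update_self] at hb
      exact Or.inl ⟨hbx, (Option.some_inj.mp hb).symm⟩
    · rw [Function.update_of_ne hbx] at hb
      exact Or.inr ⟨hbx, hb⟩
  constructor
  · intro v cv hv
    rcases hval v cv hv with ⟨rfl, rfl⟩ | ⟨_, h⟩
    · exact hc.1
    · exact hψ.1 v cv h
  · intro a b ca cb ha hb hM
    rcases hval a ca ha with ⟨ha1, ha2⟩ | ⟨ha1, ha2⟩ <;>
      rcases hval b cb hb with ⟨hb1, hb2⟩ | ⟨hb1, hb2⟩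
    · rw [ha1, hb1] at hM
      exact G.loopless.irrefl x (C.adj_of _ _ _ _ hM)
    · rw [ha1, ha2] at hM
      exact hc.2 b cb hb2 hM
    · rw [hb1, hb2] at hM
      exact hc.2 a ca ha2 (C.symm _ _ _ _ hM)
    · exact hψ.2 a b ca cb ha2 hb2 hM

lemma availSet_update_le [DecidableEq V] (C : CorrAssignment G) (ψ : V → Option ℕ)
    (x y : V) (d : ℕ) :
    (availSet C ψ x).ncard ≤ (availSet C (Function.update ψ y (some d)) x).ncard + 1 := by
  have hMfin : ({c : ℕ | C.M x c y d}).Finite :=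
    (C.L x).finite_toSet.subset fun c hc => C.mem_left _ _ _ _ hc
  have hone : ({c : ℕ | C.M x c y d}).ncard ≤ 1 := by
    rcases Set.eq_empty_or_nonempty {c : ℕ | C.M x c y d} with he | ⟨c0, hc0⟩
    · simp [he]
    · have hsub : {c : ℕ | C.M x c y d} ⊆ {c0} := fun c hc =>
        Set.mem_singleton_iff.mpr (matching_left C hc hc0)
      calc ({c : ℕ | C.M x c y d}).ncard ≤ ({c0} : Set ℕ).ncard :=
            Set.ncard_le_ncard hsub (Set.finite_singleton _)
        _ = 1 := Set.ncard_singleton _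
  have hsub : availSet C ψ x ⊆
      availSet C (Function.update ψ y (some d)) x ∪ {c : ℕ | C.M x c y d} := by
    intro c hc
    by_cases hm : C.M x c y d
    · exact Or.inr hm
    · refine Or.inl ⟨hc.1, fun v cv hv => ?_⟩
      rcases eq_or_ne v y with rfl | hvy
      · rw [Function.update_self] at hv
        cases Option.some_inj.mp hv
        exact hm
      · rw [Function.update_of_ne hvy] at hv
        exact hc.2 v cv hv
  calc (availSet C ψ x).ncard
      ≤ (availSet C (Function.update ψ y (some d)) x ∪ {c : ℕ | C.M x c y d}).ncard :=
        Set.ncard_le_ncard hsub ((availSet_finite C _ x).union hMfin)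
    _ ≤ (availSet C (Function.update ψ y (some d)) x).ncard
          + ({c : ℕ | C.M x c y d}).ncard :=
        Set.ncard_union_le _ _
    _ ≤ _ := by omega

variable [DecidableEq V]

/-- Extend a partial coloring along a sequence of (vertex, color) pairs. -/
def extCol (φ : V → Option ℕ) : ∀ k : ℕ, (Fin k → V × ℕ) → V → Option ℕ
  | 0, _ => φ
  | k + 1, f =>
    Function.update (extCol φ k (Fin.init f)) (f (Fin.last k)).1 (some (f (Fin.last k)).2)

lemma extCol_zero (φ : V → Option ℕ) (f : Fin 0 → V × ℕ) : extCol φ 0 f = φ := rfl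

lemma extCol_succ (φ : V → Option ℕ) (k : ℕ) (f : Fin (k + 1) → V × ℕ) :
    extCol φ (k + 1) f =
      Function.update (extCol φ k (Fin.init f)) (f (Fin.last k)).1
        (some (f (Fin.last k)).2) := rfl

/-- A valid extension sequence: each vertex is a good uncolored neighbor of `u` and each
color is available at the time of coloring. -/
def ValidSeq (C : CorrAssignment G) (Δ : ℕ) (u : V) (φ : V → Option ℕ) :
    ∀ k : ℕ, (Fin k → V × ℕ) → Prop
  | 0, _ => True
  | k + 1, f =>
    ValidSeq C Δ u φ k (Fin.init f) ∧
    (G.Adj u (f (Fin.last k)).1 ∧ φ (f (Fin.last k)).1 = none ∧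
      ¬ EventA C Δ (f (Fin.last k)).1 φ) ∧
    extCol φ k (Fin.init f) (f (Fin.last k)).1 = none ∧
    (f (Fin.last k)).2 ∈ availSet C (extCol φ k (Fin.init f)) (f (Fin.last k)).1

lemma validSeq_succ {C : CorrAssignment G} {Δ : ℕ} {u : V} {φ : V → Option ℕ} {k : ℕ}
    (f : Fin (k + 1) → V × ℕ) :
    ValidSeq C Δ u φ (k + 1) f ↔
      (ValidSeq C Δ u φ k (Fin.init f) ∧
      (G.Adj u (f (Fin.last k)).1 ∧ φ (f (Fin.last k)).1 = none ∧
        ¬ EventA C Δ (f (Fin.last k)).1 φ) ∧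
      extCol φ k (Fin.init f) (f (Fin.last k)).1 = none ∧
      (f (Fin.last k)).2 ∈ availSet C (extCol φ k (Fin.init f)) (f (Fin.last k)).1) :=
  Iff.rfl

lemma extCol_eq_of_forall_ne (φ : V → Option ℕ) :
    ∀ (k : ℕ) (f : Fin k → V × ℕ) (v : V), (∀ i, (f i).1 ≠ v) → extCol φ k f v = φ v
  | 0, _, _, _ => rfl
  | k + 1, f, v, h => by
    rw [extCol_succ, Function.update_of_ne (Ne.symm (h (Fin.last k)))]
    exact extCol_eq_of_forall_ne φ k (Fin.init f) v fun i => h i.castSucc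

lemma validSeq_good {C : CorrAssignment G} {Δ : ℕ} {u : V} {φ : V → Option ℕ} :
    ∀ (k : ℕ) (f : Fin k → V × ℕ), ValidSeq C Δ u φ k f → ∀ i : Fin k,
      G.Adj u (f i).1 ∧ φ (f i).1 = none ∧ (f i).2 ∈ C.L (f i).1
  | 0, _, _, i => i.elim0
  | k + 1, f, hv, i => by
    induction i using Fin.lastCases with
    | last => exact ⟨hv.2.1.1, hv.2.1.2.1, hv.2.2.2.1⟩
    | cast j => exact validSeq_good k (Fin.init f) hv.1 j

lemma extCol_apply_eq {C : CorrAssignment G} {Δ : ℕ} {u : V} {φ : V → Option ℕ} :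
    ∀ (k : ℕ) (f : Fin k → V × ℕ), ValidSeq C Δ u φ k f → ∀ i : Fin k,
      extCol φ k f (f i).1 = some (f i).2
  | 0, _, _, i => i.elim0
  | k + 1, f, hv, i => by
    induction i using Fin.lastCases with
    | last => rw [extCol_succ, Function.update_self]
    | cast j =>
      have hne : (f (Fin.castSucc j)).1 ≠ (f (Fin.last k)).1 := by
        intro he
        have h1 : extCol φ k (Fin.init f) (f (Fin.castSucc j)).1
            = some (f (Fin.castSucc j)).2 := extCol_apply_eq k (Fin.init f) hv.1 j
        rw [he, hv.2.2.1] at h1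
        cases h1
      rw [extCol_succ, Function.update_of_ne hne]
      exact extCol_apply_eq k (Fin.init f) hv.1 j

lemma extCol_isPartial {C : CorrAssignment G} {Δ : ℕ} {u : V} {φ : V → Option ℕ}
    (hφ : IsPartialColoring C φ) :
    ∀ (k : ℕ) (f : Fin k → V × ℕ), ValidSeq C Δ u φ k f →
      IsPartialColoring C (extCol φ k f)
  | 0, _, _ => hφ
  | k + 1, f, hv => by
    rw [extCol_succ]
    exact isPartial_update (extCol_isPartial hφ k (Fin.init f) hv.1) hv.2.2.2

lemma extCol_avail {C : CorrAssignment G} {Δ : ℕ} {u : V} {φ : V → Option ℕ} :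
    ∀ (k : ℕ) (f : Fin k → V × ℕ), ValidSeq C Δ u φ k f → ∀ x : V,
      (availSet C φ x).ncard ≤ (availSet C (extCol φ k f) x).ncard + k
  | 0, f, _, x => by rw [extCol_zero]; omega
  | k + 1, f, hv, x => by
    have h1 := extCol_avail k (Fin.init f) hv.1 x
    have h2 := availSet_update_le C (extCol φ k (Fin.init f)) x
      (f (Fin.last k)).1 (f (Fin.last k)).2
    rw [extCol_succ]
    omega

lemma exists_inj_fin {α : Type*} {s : Set α} (hs : s.Finite) {n : ℕ} (hn : n ≤ s.ncard) :
    ∃ f : Fin n → α, Function.Injective f ∧ ∀ i, f i ∈ s := by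
  classical
  rw [Set.ncard_eq_toFinset_card s hs] at hn
  obtain ⟨t, hts, htc⟩ := Finset.exists_subset_card_eq hn
  have e : ↥t ≃ Fin n := Fintype.equivFinOfCardEq (by rw [Fintype.card_coe]; exact htc)
  refine ⟨fun i => (e.symm i : α), ?_, ?_⟩
  · intro i j hij
    exact e.symm.injective (Subtype.coe_injective hij)
  · intro i
    exact hs.mem_toFinset.mp (hts (e.symm i).2)

lemma ncard_prod {α β : Type*} (s : Set α) (t : Set β) :
    (s ×ˢ t).ncard = s.ncard * t.ncard := by
  rw [← Nat.card_coe_set_eq, ← Nat.card_coe_set_eq, ← Nat.card_coe_set_eq,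
    Nat.card_congr (Equiv.Set.prod s t), Nat.card_prod]

lemma two_pow_big : ∀ n : ℕ, 64 ≤ n → 8 * (n + 1) ^ 6 < 2 ^ n := by
  intro n hn
  induction n, hn using Nat.le_induction with
  | base => norm_num
  | succ n hn ih =>
    show 8 * (n + 2) ^ 6 < 2 ^ (n + 1)
    have h1 : 16 * (n + 2) ≤ 17 * (n + 1) := by omega
    have h2 : (16 * (n + 2)) ^ 6 ≤ (17 * (n + 1)) ^ 6 := Nat.pow_le_pow_left h1 6
    rw [mul_pow, mul_pow] at h2
    norm_num at h2
    have key : (n + 2) ^ 6 ≤ 2 * (n + 1) ^ 6 := by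
      generalize hX : (n + 2) ^ 6 = X at h2 ⊢
      generalize hY : (n + 1) ^ 6 = Y at h2 ⊢
      omega
    have h3 : 2 * 2 ^ n = 2 ^ (n + 1) := by rw [pow_succ]; ring
    linarith

end AuxLemmas

end RandomCorr

open RandomCorr

/-- (The conditional probability given that the restriction of `φ` to
`G − N[u]` equals `φ₀` is expressed as a ratio of counts: `Pr[B_u | ·] < 1/(8Δ³)` becomes
`8Δ³·|B_u ∩ B| < |B|`, where `B` is the conditioning event; `φ₀` is a partial coloring of
`G − N[u]`, encoded as a partial coloring of `G` undefined on `N[u]`.)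
For all sufficiently large `Δ`: if `G` has maximum degree `Δ`, `u ∈ V(G)` and `φ₀` is a
partial coloring of `G − N[u]`, then for a uniformly random partial `(L,M)`-coloring `φ`
of `G`, conditioned on its restriction to `G − N[u]` being `φ₀`, the probability that `u`
has at least `Δ^{7/12}` uncolored neighbors `x` with `A_x` false is less than
`1/(8Δ³)`. -/
theorem eventB_unlikely_conditional :
    ∃ Δ₀ : ℕ, ∀ Δ : ℕ, Δ₀ ≤ Δ →
      ∀ (V : Type) [Fintype V] (G : SimpleGraph V)
        (C : RandomCorr.CorrAssignment G) (u : V),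
        RandomCorr.maxDeg G = Δ →
        ∀ φ₀ : V → Option ℕ,
          RandomCorr.IsPartialColoring C φ₀ →
          (∀ v : V, v = u ∨ G.Adj u v → φ₀ v = none) →
          8 * Δ ^ 3 *
            Set.ncard {φ : V → Option ℕ | RandomCorr.IsPartialColoring C φ ∧
              (∀ v : V, ¬(v = u ∨ G.Adj u v) → φ v = φ₀ v) ∧
              (Δ : ℝ) ^ ((7 : ℝ)/12) ≤
                (Set.ncard {x : V | G.Adj u x ∧ φ x = none ∧
                  ¬ RandomCorr.EventA C Δ x φ} : ℝ)} <
          Set.ncard {φ : V → Option ℕ | RandomCorr.IsPartialColoring C φ ∧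
            (∀ v : V, ¬(v = u ∨ G.Adj u v) → φ v = φ₀ v)} := by
  classical
  refine ⟨531441, ?_⟩
  intro Δ hΔ V _ G C u hmax φ₀ hφ₀pc hφ₀none
  set Bad : Set (V → Option ℕ) :=
    {φ : V → Option ℕ | RandomCorr.IsPartialColoring C φ ∧
      (∀ v : V, ¬(v = u ∨ G.Adj u v) → φ v = φ₀ v) ∧
      (Δ : ℝ) ^ ((7 : ℝ)/12) ≤
        (Set.ncard {x : V | G.Adj u x ∧ φ x = none ∧
          ¬ RandomCorr.EventA C Δ x φ} : ℝ)} with hBadDef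
  set Bs : Set (V → Option ℕ) :=
    {φ : V → Option ℕ | RandomCorr.IsPartialColoring C φ ∧
      (∀ v : V, ¬(v = u ∨ G.Adj u v) → φ v = φ₀ v)} with hBsDef
  -- numerical setup
  have hΔpos : 0 < Δ := by omega
  set A : ℕ := ⌈(Δ : ℝ) ^ ((7 : ℝ)/12)⌉₊ with hAdef
  set t : ℕ := Nat.sqrt Δ with htdef
  set s2 : ℕ := Nat.sqrt (2 * Δ) with hs2def
  have hxpos : (0:ℝ) < (Δ:ℝ) := by exact_mod_cast hΔpos
  have hΔR : (531441:ℝ) ≤ (Δ:ℝ) := by exact_mod_cast hΔ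
  have hsqrt_nonneg := Real.sqrt_nonneg (Δ:ℝ)
  have htt : ((t:ℝ)) * t ≤ (Δ:ℝ) := by exact_mod_cast Nat.sqrt_le Δ
  have ht_le : (t:ℝ) ≤ Real.sqrt (Δ:ℝ) :=
    calc (t:ℝ) = Real.sqrt ((t:ℝ)*(t:ℝ)) := (Real.sqrt_mul_self (by positivity)).symm
      _ ≤ Real.sqrt (Δ:ℝ) := Real.sqrt_le_sqrt htt
  have htt2 : ((s2:ℝ)) * s2 ≤ 2 * (Δ:ℝ) := by exact_mod_cast Nat.sqrt_le (2 * Δ)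
  have hs2_le : (s2:ℝ) ≤ Real.sqrt (2*(Δ:ℝ)) :=
    calc (s2:ℝ) = Real.sqrt ((s2:ℝ)*(s2:ℝ)) := (Real.sqrt_mul_self (by positivity)).symm
      _ ≤ Real.sqrt (2*(Δ:ℝ)) := Real.sqrt_le_sqrt htt2
  have hsqrt2 : Real.sqrt (2*(Δ:ℝ)) ≤ (3/2) * Real.sqrt (Δ:ℝ) := by
    rw [Real.sqrt_mul (by norm_num : (0:ℝ) ≤ 2)]
    have h2 : Real.sqrt 2 ≤ 3/2 := by
      rw [show (3/2:ℝ) = Real.sqrt ((3/2)^2) from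
        (Real.sqrt_sq (by norm_num : (0:ℝ) ≤ 3/2)).symm]
      exact Real.sqrt_le_sqrt (by norm_num)
    nlinarith [Real.sqrt_nonneg (Δ:ℝ), Real.sqrt_nonneg (2:ℝ)]
  have hone : (1:ℝ) ≤ (1/2) * Real.sqrt (Δ:ℝ) := by
    have h4 : (2:ℝ) ≤ Real.sqrt (Δ:ℝ) := by
      rw [show (2:ℝ) = Real.sqrt 4 from by
        rw [show (4:ℝ) = 2^2 by norm_num, Real.sqrt_sq (by norm_num : (0:ℝ) ≤ 2)]]
      exact Real.sqrt_le_sqrt (by linarith)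
    linarith
  have h112 : (3:ℝ) ≤ (Δ:ℝ) ^ ((1:ℝ)/12) := by
    have h1 : ((3:ℝ) ^ (12:ℕ)) ≤ (Δ:ℝ) := by norm_num; linarith
    have h2 : ((3:ℝ) ^ (12:ℕ)) ^ ((1:ℝ)/12) ≤ (Δ:ℝ) ^ ((1:ℝ)/12) :=
      Real.rpow_le_rpow (by positivity) h1 (by norm_num)
    calc (3:ℝ) = ((3:ℝ) ^ (12:ℕ)) ^ ((1:ℝ)/12) := by
          rw [← Real.rpow_natCast (3:ℝ) 12, ← Real.rpow_mul (by norm_num : (0:ℝ) ≤ 3)]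
          norm_num
      _ ≤ _ := h2
  have h712 : (Δ:ℝ) ^ ((7:ℝ)/12) = (Δ:ℝ) ^ ((1:ℝ)/12) * Real.sqrt (Δ:ℝ) := by
    rw [Real.sqrt_eq_rpow, ← Real.rpow_add hxpos]
    norm_num
  have hN1R : ((t + s2 + 1 : ℕ) : ℝ) ≤ (A:ℝ) := by
    have hA1 : (Δ:ℝ) ^ ((7:ℝ)/12) ≤ (A:ℝ) := Nat.le_ceil _
    have h3s : (3:ℝ) * Real.sqrt (Δ:ℝ) ≤ (Δ:ℝ) ^ ((7:ℝ)/12) := by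
      rw [h712]
      nlinarith [hsqrt_nonneg, h112]
    push_cast
    linarith [ht_le, hs2_le, hsqrt2, hone, h3s, hA1]
  have hN1 : t + s2 + 1 ≤ A := by exact_mod_cast hN1R
  set c : ℕ := A - t with hcdef
  have hc1 : s2 + 1 ≤ c := by omega
  have hcc : 2 * Δ < c * c := by
    have h5 : 2 * Δ < (s2 + 1) * (s2 + 1) := by
      simpa [Nat.succ_eq_add_one] using Nat.lt_succ_sqrt (2 * Δ)
    exact lt_of_lt_of_le h5 (Nat.mul_le_mul hc1 hc1)
  have h64 : 64 ≤ t := Nat.le_sqrt.mpr (by omega)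
  have h8Δ : 8 * Δ ^ 3 < 2 ^ t := by
    have hlt : Δ < (t + 1) * (t + 1) := by
      simpa [Nat.succ_eq_add_one] using Nat.lt_succ_sqrt Δ
    have h3 : Δ ^ 3 < ((t + 1) * (t + 1)) ^ 3 := Nat.pow_lt_pow_left hlt (by norm_num)
    have h6 : ((t + 1) * (t + 1)) ^ 3 = (t + 1) ^ 6 := by ring
    have h7 := two_pow_big t h64
    calc 8 * Δ ^ 3 < 8 * (t + 1) ^ 6 := by rw [← h6]; linarith
      _ < 2 ^ t := h7
  -- degree bound
  have hNB : (G.neighborSet u).ncard ≤ Δ := by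
    have h : (G.neighborSet u).ncard ≤ RandomCorr.maxDeg G := by
      unfold RandomCorr.maxDeg
      exact Finset.le_sup (f := fun v => (G.neighborSet v).ncard) (Finset.mem_univ u)
    rwa [hmax] at h
  -- finiteness
  have hBsfin : Bs.Finite := by
    apply Set.Finite.subset (Set.Finite.pi (fun v : V =>
      (((C.L v).finite_toSet.image some).insert none)))
    intro φ hφ
    intro v _
    rcases h : φ v with _ | cv
    · exact Set.mem_insert _ _
    · exact Set.mem_insert_of_mem _ ⟨cv, hφ.1.1 v cv h, rfl⟩
  have hBadBs : Bad ⊆ Bs := fun φ h => ⟨h.1, h.2.1⟩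
  have hBspos : 0 < Bs.ncard := by
    rw [Set.ncard_pos hBsfin]
    exact ⟨φ₀, hφ₀pc, fun v _ => rfl⟩
  have hbigLfin : (⋃ v : V, ((C.L v : Set ℕ))).Finite :=
    Set.finite_iUnion fun v => (C.L v).finite_toSet
  have hTfin : ∀ k : ℕ, Set.Finite {p : (V → Option ℕ) × (Fin k → V × ℕ) |
      p.1 ∈ Bad ∧ ValidSeq C Δ u p.1 k p.2} := by
    intro k
    apply Set.Finite.subset (Set.Finite.prod hBsfin (Set.Finite.pi
      (fun _ : Fin k => Set.Finite.prod (Set.finite_univ (α := V)) hbigLfin)))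
    intro p hp
    refine ⟨hBadBs hp.1, ?_⟩
    intro i _
    exact ⟨Set.mem_univ _, Set.mem_iUnion.mpr ⟨(p.2 i).1, (validSeq_good k p.2 hp.2 i).2.2⟩⟩
  -- counting facts about Bad
  have hGoodCard : ∀ φ, φ ∈ Bad →
      A ≤ {x : V | G.Adj u x ∧ φ x = none ∧ ¬ RandomCorr.EventA C Δ x φ}.ncard :=
    fun φ h => Nat.ceil_le.mpr h.2.2
  have hAvailA : ∀ (φ : V → Option ℕ) (x : V), φ x = none →
      ¬ RandomCorr.EventA C Δ x φ → A ≤ RandomCorr.availCount C φ x := by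
    intro φ x hnone hna
    by_contra hlt
    exact hna ⟨hnone, Nat.lt_ceil.mp (Nat.lt_of_not_le hlt)⟩
  -- the iteration chain
  have hchain : ∀ k : ℕ, k ≤ t →
      Bad.ncard * (c * c) ^ k ≤
        {p : (V → Option ℕ) × (Fin k → V × ℕ) |
          p.1 ∈ Bad ∧ ValidSeq C Δ u p.1 k p.2}.ncard := by
    intro k
    induction k with
    | zero =>
      intro _
      have hm : ∀ φ ∈ Bad, ((φ, fun i => i.elim0) :
          (V → Option ℕ) × (Fin 0 → V × ℕ)) ∈
          {p : (V → Option ℕ) × (Fin 0 → V × ℕ) |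
            p.1 ∈ Bad ∧ ValidSeq C Δ u p.1 0 p.2} :=
        fun φ h => ⟨h, trivial⟩
      have hinj : Set.InjOn (fun φ : V → Option ℕ =>
          ((φ, fun i => i.elim0) : (V → Option ℕ) × (Fin 0 → V × ℕ))) Bad :=
        fun a _ b _ h => congrArg Prod.fst h
      simpa using Set.ncard_le_ncard_of_injOn _ hm hinj (hTfin 0)
    | succ k ih =>
      intro hk1
      have hk : k ≤ t := by omega
      have ihk := ih hk
      have hstep : {p : (V → Option ℕ) × (Fin k → V × ℕ) |
            p.1 ∈ Bad ∧ ValidSeq C Δ u p.1 k p.2}.ncard * (c * c) ≤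
          {p : (V → Option ℕ) × (Fin (k + 1) → V × ℕ) |
            p.1 ∈ Bad ∧ ValidSeq C Δ u p.1 (k + 1) p.2}.ncard := by
        have hch : ∀ p : (V → Option ℕ) × (Fin k → V × ℕ),
            ∃ gh : (Fin c → V) × (Fin c → Fin c → ℕ),
              (p.1 ∈ Bad ∧ ValidSeq C Δ u p.1 k p.2) →
                Function.Injective gh.1 ∧
                (∀ i, gh.1 i ∈
                  {x : V | G.Adj u x ∧ p.1 x = none ∧ ¬ RandomCorr.EventA C Δ x p.1} \
                    Set.range (fun j => (p.2 j).1)) ∧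
                ∀ i, Function.Injective (gh.2 i) ∧
                  ∀ j, gh.2 i j ∈ RandomCorr.availSet C (extCol p.1 k p.2) (gh.1 i) := by
          intro p
          by_cases hp : p.1 ∈ Bad ∧ ValidSeq C Δ u p.1 k p.2
          · have hgc := hGoodCard p.1 hp.1
            have hrange : (Set.range fun j : Fin k => (p.2 j).1).ncard ≤ k := by
              rw [← Set.image_univ]
              calc ((fun j : Fin k => (p.2 j).1) '' Set.univ).ncard
                  ≤ (Set.univ : Set (Fin k)).ncard := Set.ncard_image_le Set.finite_univ
                _ = k := by rw [Set.ncard_univ, Nat.card_eq_fintype_card, Fintype.card_fin]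
            have hdiff := Set.ncard_le_ncard_diff_add_ncard
              {x : V | G.Adj u x ∧ p.1 x = none ∧ ¬ RandomCorr.EventA C Δ x p.1}
              (Set.range fun j : Fin k => (p.2 j).1) (Set.toFinite _)
            have hcX : c ≤ ({x : V | G.Adj u x ∧ p.1 x = none ∧
                ¬ RandomCorr.EventA C Δ x p.1} \
                Set.range fun j : Fin k => (p.2 j).1).ncard := by omega
            obtain ⟨g, hginj, hgmem⟩ := exists_inj_fin (Set.toFinite _) hcX
            have hcolor : ∀ i : Fin c, ∃ h : Fin c → ℕ, Function.Injective h ∧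
                ∀ j, h j ∈ RandomCorr.availSet C (extCol p.1 k p.2) (g i) := by
              intro i
              have hxg := (hgmem i).1
              have hA2 : A ≤ RandomCorr.availCount C p.1 (g i) :=
                hAvailA p.1 (g i) hxg.2.1 hxg.2.2
              have hext := extCol_avail k p.2 hp.2 (g i)
              rw [RandomCorr.availCount_eq] at hA2
              exact exists_inj_fin (RandomCorr.availSet_finite C _ _) (by omega)
            choose h hhinj hhmem using hcolor
            exact ⟨(g, h), fun _ => ⟨hginj, hgmem, fun i => ⟨hhinj i, hhmem i⟩⟩⟩
          · exact ⟨(fun _ => u, fun _ _ => 0), fun hp' => absurd hp' hp⟩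
        choose gh hgh using hch
        have hmapsF : ∀ q ∈ (({p : (V → Option ℕ) × (Fin k → V × ℕ) |
            p.1 ∈ Bad ∧ ValidSeq C Δ u p.1 k p.2}) ×ˢ (Set.univ : Set (Fin c × Fin c))),
            ((q.1.1, Fin.snoc q.1.2 ((gh q.1).1 q.2.1, (gh q.1).2 q.2.1 q.2.2)) :
              (V → Option ℕ) × (Fin (k + 1) → V × ℕ)) ∈
              {p : (V → Option ℕ) × (Fin (k + 1) → V × ℕ) |
                p.1 ∈ Bad ∧ ValidSeq C Δ u p.1 (k + 1) p.2} := by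
          rintro ⟨p, ij⟩ hq
          have hp := hq.1
          obtain ⟨hginj, hgmem, hcol⟩ := hgh p hp
          have hx := hgmem ij.1
          have hxg := hx.1
          have hxnr : ∀ i : Fin k, (p.2 i).1 ≠ (gh p).1 ij.1 := by
            intro i he
            exact hx.2 ⟨i, he⟩
          refine ⟨hp.1, ?_⟩
          rw [validSeq_succ]
          simp only [Fin.init_snoc, Fin.snoc_last]
          refine ⟨hp.2, ⟨hxg.1, hxg.2.1, hxg.2.2⟩, ?_, ?_⟩
          · rw [extCol_eq_of_forall_ne p.1 k p.2 _ hxnr]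
            exact hxg.2.1
          · exact (hcol ij.1).2 ij.2
        have hinjF : Set.InjOn
            (fun q : ((V → Option ℕ) × (Fin k → V × ℕ)) × (Fin c × Fin c) =>
              ((q.1.1, Fin.snoc q.1.2 ((gh q.1).1 q.2.1, (gh q.1).2 q.2.1 q.2.2)) :
                (V → Option ℕ) × (Fin (k + 1) → V × ℕ)))
            (({p : (V → Option ℕ) × (Fin k → V × ℕ) |
              p.1 ∈ Bad ∧ ValidSeq C Δ u p.1 k p.2}) ×ˢ (Set.univ : Set (Fin c × Fin c))) := by
          rintro ⟨p, ij⟩ hq ⟨p', ij'⟩ hq' heq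
          have hq1 := hq.1
          have heq2 : ((p.1, Fin.snoc p.2 ((gh p).1 ij.1, (gh p).2 ij.1 ij.2)) :
              (V → Option ℕ) × (Fin (k + 1) → V × ℕ)) =
              (p'.1, Fin.snoc p'.2 ((gh p').1 ij'.1, (gh p').2 ij'.1 ij'.2)) := heq
          rw [Prod.mk.injEq] at heq2
          have h1 := heq2.1
          have h2 := heq2.2
          have hf : p.2 = p'.2 := by
            have h3 := congrArg Fin.init h2
            rwa [Fin.init_snoc, Fin.init_snoc] at h3
          have hpp : p = p' := Prod.ext h1 hf
          subst hpp
          have h3 := congrArg (fun f : Fin (k + 1) → V × ℕ => f (Fin.last k)) h2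
          simp only [Fin.snoc_last] at h3
          obtain ⟨hginj, hgmem, hcol⟩ := hgh p hq1
          have hi : ij.1 = ij'.1 := hginj (congrArg Prod.fst h3)
          have h4 : (gh p).2 ij.1 ij.2 = (gh p).2 ij'.1 ij'.2 := congrArg Prod.snd h3
          rw [← hi] at h4
          have hj : ij.2 = ij'.2 := (hcol ij.1).1 h4
          exact Prod.ext rfl (Prod.ext hi hj)
        have hcard : (({p : (V → Option ℕ) × (Fin k → V × ℕ) |
            p.1 ∈ Bad ∧ ValidSeq C Δ u p.1 k p.2}) ×ˢ
              (Set.univ : Set (Fin c × Fin c))).ncard =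
            {p : (V → Option ℕ) × (Fin k → V × ℕ) |
              p.1 ∈ Bad ∧ ValidSeq C Δ u p.1 k p.2}.ncard * (c * c) := by
          rw [RandomCorr.ncard_prod, Set.ncard_univ]
          simp [Nat.card_eq_fintype_card]
        rw [← hcard]
        exact Set.ncard_le_ncard_of_injOn _ hmapsF hinjF (hTfin (k + 1))
      calc Bad.ncard * (c * c) ^ (k + 1)
          = Bad.ncard * (c * c) ^ k * (c * c) := by ring
        _ ≤ {p : (V → Option ℕ) × (Fin k → V × ℕ) |
              p.1 ∈ Bad ∧ ValidSeq C Δ u p.1 k p.2}.ncard * (c * c) :=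
            Nat.mul_le_mul_right _ ihk
        _ ≤ _ := hstep
  -- the final injection
  have hfinal : {p : (V → Option ℕ) × (Fin t → V × ℕ) |
      p.1 ∈ Bad ∧ ValidSeq C Δ u p.1 t p.2}.ncard ≤ Bs.ncard * Δ ^ t := by
    have hmaps : ∀ p ∈ {p : (V → Option ℕ) × (Fin t → V × ℕ) |
        p.1 ∈ Bad ∧ ValidSeq C Δ u p.1 t p.2},
        ((extCol p.1 t p.2, fun i => (p.2 i).1) : (V → Option ℕ) × (Fin t → V)) ∈
          Bs ×ˢ (Set.pi Set.univ fun _ : Fin t => G.neighborSet u) := by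
      intro p hp
      refine ⟨⟨?_, ?_⟩, ?_⟩
      · exact extCol_isPartial (hBadBs hp.1).1 t p.2 hp.2
      · intro v hv
        have hne : ∀ i : Fin t, (p.2 i).1 ≠ v := by
          intro i he
          exact hv (Or.inr (he ▸ (validSeq_good t p.2 hp.2 i).1))
        show extCol p.1 t p.2 v = φ₀ v
        rw [extCol_eq_of_forall_ne p.1 t p.2 v hne]
        exact (hBadBs hp.1).2 v hv
      · intro i _
        exact (validSeq_good t p.2 hp.2 i).1
    have hinj : Set.InjOn (fun p : (V → Option ℕ) × (Fin t → V × ℕ) =>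
        ((extCol p.1 t p.2, fun i => (p.2 i).1) : (V → Option ℕ) × (Fin t → V)))
        {p : (V → Option ℕ) × (Fin t → V × ℕ) |
          p.1 ∈ Bad ∧ ValidSeq C Δ u p.1 t p.2} := by
      rintro ⟨φ, f⟩ hp ⟨φ', f'⟩ hp' heq
      have heq2 : ((extCol φ t f, fun i : Fin t => (f i).1) :
          (V → Option ℕ) × (Fin t → V)) =
          (extCol φ' t f', fun i : Fin t => (f' i).1) := heq
      rw [Prod.mk.injEq] at heq2
      have hψ := heq2.1
      have hw := heq2.2
      have hf : f = f' := by
        funext i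
        have hwi : (f i).1 = (f' i).1 := congrFun hw i
        have e1 : extCol φ t f (f i).1 = some (f i).2 := extCol_apply_eq t f hp.2 i
        have e2 : extCol φ' t f' (f' i).1 = some (f' i).2 := extCol_apply_eq t f' hp'.2 i
        rw [← hwi, ← hψ, e1] at e2
        exact Prod.ext hwi (Option.some_inj.mp e2)
      have hφeq : φ = φ' := by
        funext v
        by_cases hvm : ∃ i : Fin t, (f i).1 = v
        · obtain ⟨i, hi⟩ := hvm
          have g1 : φ (f i).1 = none := (validSeq_good t f hp.2 i).2.1
          have g2 : φ' (f' i).1 = none := (validSeq_good t f' hp'.2 i).2.1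
          rw [hi] at g1
          rw [← hf, hi] at g2
          rw [g1, g2]
        · push_neg at hvm
          have e1 := extCol_eq_of_forall_ne φ t f v hvm
          have e2 := extCol_eq_of_forall_ne φ' t f' v (by rw [← hf]; exact hvm)
          rw [← e1, ← e2, hψ]
      exact Prod.ext hφeq hf
    calc {p : (V → Option ℕ) × (Fin t → V × ℕ) |
          p.1 ∈ Bad ∧ ValidSeq C Δ u p.1 t p.2}.ncard
        ≤ (Bs ×ˢ (Set.pi Set.univ fun _ : Fin t => G.neighborSet u)).ncard :=
          Set.ncard_le_ncard_of_injOn _ hmaps hinj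
            (hBsfin.prod (Set.Finite.pi fun _ => Set.toFinite _))
      _ = Bs.ncard * (G.neighborSet u).ncard ^ t := by
          rw [RandomCorr.ncard_prod]
          congr 1
          rw [← Nat.card_coe_set_eq, Nat.card_congr (Equiv.Set.univPi _), Nat.card_pi,
            Finset.prod_const, Finset.card_univ, Fintype.card_fin, Nat.card_coe_set_eq]
      _ ≤ Bs.ncard * Δ ^ t := Nat.mul_le_mul_left _ (Nat.pow_le_pow_left hNB t)
  -- wrap up
  have h1 : Bad.ncard * (c * c) ^ t ≤ Bs.ncard * Δ ^ t := le_trans (hchain t le_rfl) hfinal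
  have h2 : Bad.ncard * (2 * Δ) ^ t ≤ Bs.ncard * Δ ^ t :=
    le_trans (Nat.mul_le_mul_left _ (Nat.pow_le_pow_left (le_of_lt hcc) t)) h1
  have h3 : Bad.ncard * 2 ^ t ≤ Bs.ncard := by
    have hp : 0 < Δ ^ t := pow_pos hΔpos t
    have h4 : (Bad.ncard * 2 ^ t) * Δ ^ t ≤ Bs.ncard * Δ ^ t := by
      calc (Bad.ncard * 2 ^ t) * Δ ^ t = Bad.ncard * (2 * Δ) ^ t := by
            rw [mul_pow]; ring
        _ ≤ _ := h2
    exact Nat.le_of_mul_le_mul_right h4 hp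
  rcases Nat.eq_zero_or_pos Bad.ncard with h0 | hpos
  · rw [h0, Nat.mul_zero]
    exact hBspos
  · calc 8 * Δ ^ 3 * Bad.ncard < 2 ^ t * Bad.ncard := mul_lt_mul_of_pos_right h8Δ hpos
      _ = Bad.ncard * 2 ^ t := Nat.mul_comm _ _
      _ ≤ Bs.ncard := h3
end
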